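/- For each k ≥ 2, in the (3k−1)-job instance above, the schedule assigning J1 to M1, J2 to M2, J3 to M1, and for 1 ≤ t ≤ k−2 assigning J_{3t+1} to M2 and J_{3t+2}, J_{3t+3} to M1, and J_{3k−2}, J_{3k−1} to M2, has makespan k+2. Consequently the ratio of this makespan to the optimal makespan is k+2 = (n+7)/3 where n = 3k−1, i.e., it grows linearly in n. -/

import Mathlib

open Classical Finset

noncomputable section

/-- The `(3k − 1)`-job two-machine instance of the linear SPoA lower bound
(job `j` is 0-indexed: `J_{j+1}`; machine `i`: M1 = 0, M2 = 1). -/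
def Plin (k : ℕ) : ℕ → Fin 2 → ℝ := fun j i =>
  if j = 0 then (if i = 0 then (k : ℝ) + 1 else 0)
  else if j ≤ 2 then (if i = 0 then 0 else (k : ℝ))
  else if j = 3*k - 3 then 1
  else if j = 3*k - 2 then (if i = 0 then 2 else 1)
  else if j % 3 = 0 then (if i = 0 then (k : ℝ) - (j / 3 : ℕ) else 0)
  else (if i = 0 then 0 else (k : ℝ) - (j / 3 : ℕ) - 1)

/-- Load of machine `i` under schedule `s` for the first `n` jobs. -/
def fLoad (P : ℕ → Fin 2 → ℝ) (n : ℕ) (s : ℕ → Fin 2) (i : Fin 2) : ℝ :=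
  ∑ j ∈ Finset.range n, if s j = i then P j i else 0

/-- Makespan of schedule `s`. -/
def fMk (P : ℕ → Fin 2 → ℝ) (n : ℕ) (s : ℕ → Fin 2) : ℝ :=
  max (fLoad P n s 0) (fLoad P n s 1)

/-- Optimal makespan. -/
def optMk (P : ℕ → Fin 2 → ℝ) (n : ℕ) : ℝ := ⨅ s : ℕ → Fin 2, fMk P n s

/-- The subgame-perfect-equilibrium schedule: J1 → M1, J2 → M2, J3 → M1;
for 1 ≤ t ≤ k−2: J_{3t+1} → M2 and J_{3t+2}, J_{3t+3} → M1;
J_{3k−2}, J_{3k−1} → M2. -/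
def sSpeLin (k : ℕ) : ℕ → Fin 2 := fun j =>
  if j = 0 then 0
  else if j = 1 then 1
  else if j = 2 then 0
  else if j = 3*k - 3 then 1
  else if j = 3*k - 2 then 1
  else if j % 3 = 0 then 1
  else 0

set_option maxHeartbeats 1000000 in
lemma plin_nonneg (k : ℕ) (hk : 2 ≤ k) (j : ℕ) (hj : j < 3*k - 1) (i : Fin 2) :
    0 ≤ Plin k j i := by
  unfold Plin
  split_ifs with h0 h2 h3 h4 h5 h6 h7 h8 <;> try positivity
  · have h : j / 3 + 2 ≤ k := by omega
    have h' := (Nat.cast_le (α := ℝ)).mpr h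
    push_cast at h' ⊢; linarith
  · have h : j / 3 + 2 ≤ k := by omega
    have h' := (Nat.cast_le (α := ℝ)).mpr h
    push_cast at h' ⊢; linarith

/-- An optimal schedule. -/
def sStarLin (k : ℕ) : ℕ → Fin 2 := fun j =>
  if j = 3*k - 3 then 0
  else if j = 3*k - 2 then 1
  else if j % 3 = 0 then 1
  else 0

set_option maxHeartbeats 1000000 in
lemma load_spe_0 (k : ℕ) (hk : 2 ≤ k) :
    fLoad (Plin k) (3*k - 1) (sSpeLin k) 0 = (k : ℝ) + 1 := by
  unfold fLoad
  have hcong : ∀ j ∈ Finset.range (3*k-1),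
      (if sSpeLin k j = 0 then Plin k j 0 else 0) = (if j = 0 then (k:ℝ)+1 else 0) := by
    intro j hj
    simp only [Finset.mem_range] at hj
    unfold sSpeLin Plin
    split_ifs <;> first | rfl | omega | norm_num | simp_all
  rw [Finset.sum_congr rfl hcong, Finset.sum_ite_eq' (Finset.range (3*k-1)) 0 (fun _ => (k:ℝ)+1)]
  simp only [Finset.mem_range]
  rw [if_pos (by omega)]

set_option maxHeartbeats 1000000 in
lemma load_spe_1 (k : ℕ) (hk : 2 ≤ k) :
    fLoad (Plin k) (3*k - 1) (sSpeLin k) 1 = (k : ℝ) + 2 := by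
  unfold fLoad
  have hcong : ∀ j ∈ Finset.range (3*k-1),
      (if sSpeLin k j = 1 then Plin k j 1 else 0)
        = (if j = 1 then (k:ℝ) else 0) + ((if j = 3*k-3 then (1:ℝ) else 0)
            + (if j = 3*k-2 then (1:ℝ) else 0)) := by
    intro j hj
    simp only [Finset.mem_range] at hj
    unfold sSpeLin Plin
    split_ifs <;> first | rfl | omega | norm_num | simp_all
  rw [Finset.sum_congr rfl hcong, Finset.sum_add_distrib, Finset.sum_add_distrib,
    Finset.sum_ite_eq' (Finset.range (3*k-1)) 1 (fun _ => (k:ℝ)),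
    Finset.sum_ite_eq' (Finset.range (3*k-1)) (3*k-3) (fun _ => (1:ℝ)),
    Finset.sum_ite_eq' (Finset.range (3*k-1)) (3*k-2) (fun _ => (1:ℝ))]
  simp only [Finset.mem_range]
  rw [if_pos (by omega), if_pos (by omega), if_pos (by omega)]
  ring

set_option maxHeartbeats 1000000 in
lemma load_star_0 (k : ℕ) (hk : 2 ≤ k) :
    fLoad (Plin k) (3*k - 1) (sStarLin k) 0 = 1 := by
  unfold fLoad
  have hcong : ∀ j ∈ Finset.range (3*k-1),
      (if sStarLin k j = 0 then Plin k j 0 else 0) = (if j = 3*k-3 then (1:ℝ) else 0) := by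
    intro j hj
    simp only [Finset.mem_range] at hj
    unfold sStarLin Plin
    split_ifs <;> first | rfl | omega | norm_num | simp_all
  rw [Finset.sum_congr rfl hcong, Finset.sum_ite_eq' (Finset.range (3*k-1)) (3*k-3) (fun _ => (1:ℝ))]
  simp only [Finset.mem_range]
  rw [if_pos (by omega)]

set_option maxHeartbeats 1000000 in
lemma load_star_1 (k : ℕ) (hk : 2 ≤ k) :
    fLoad (Plin k) (3*k - 1) (sStarLin k) 1 = 1 := by
  unfold fLoad
  have hcong : ∀ j ∈ Finset.range (3*k-1),
      (if sStarLin k j = 1 then Plin k j 1 else 0) = (if j = 3*k-2 then (1:ℝ) else 0) := by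
    intro j hj
    simp only [Finset.mem_range] at hj
    unfold sStarLin Plin
    split_ifs <;> first | rfl | omega | norm_num | simp_all
  rw [Finset.sum_congr rfl hcong, Finset.sum_ite_eq' (Finset.range (3*k-1)) (3*k-2) (fun _ => (1:ℝ))]
  simp only [Finset.mem_range]
  rw [if_pos (by omega)]

lemma fmk_lb (k : ℕ) (hk : 2 ≤ k) (s : ℕ → Fin 2) :
    (1 : ℝ) ≤ fMk (Plin k) (3*k - 1) s := by
  obtain ⟨i, hi⟩ : ∃ i, s (3*k - 3) = i := ⟨_, rfl⟩
  have hmem : 3*k - 3 ∈ Finset.range (3*k - 1) := Finset.mem_range.mpr (by omega)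
  have hP : Plin k (3*k-3) i = 1 := by
    unfold Plin
    rw [if_neg (by omega), if_neg (by omega), if_pos rfl]
  have h1 : (1 : ℝ) ≤ fLoad (Plin k) (3*k - 1) s i := by
    unfold fLoad
    calc (1:ℝ) = (if s (3*k-3) = i then Plin k (3*k-3) i else 0) := by rw [if_pos hi, hP]
      _ ≤ _ := Finset.single_le_sum (f := fun j => if s j = i then Plin k j i else 0)
          (fun j hj => by
            show 0 ≤ (if s j = i then Plin k j i else 0)
            split_ifs
            · exact plin_nonneg k hk j (Finset.mem_range.mp hj) i
            · exact le_refl 0) hmem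
  unfold fMk
  fin_cases i
  · exact h1.trans (le_max_left _ _)
  · exact h1.trans (le_max_right _ _)

lemma opt_eq_one (k : ℕ) (hk : 2 ≤ k) : optMk (Plin k) (3*k - 1) = 1 := by
  unfold optMk
  apply le_antisymm
  · exact ciInf_le ⟨1, by rintro x ⟨s, rfl⟩; exact fmk_lb k hk s⟩ (sStarLin k) |>.trans_eq
      (by unfold fMk; rw [load_star_0 k hk, load_star_1 k hk]; simp)
  · exact le_ciInf (fun s => fmk_lb k hk s)


/-- For every `k ≥ 2`, the above schedule has makespan `k + 2`, so its ratio to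
the optimal makespan is `k + 2 = (n + 7)/3` with `n = 3k − 1`: linear in `n`. -/
theorem linear_lb_spe_makespan :
    ∀ k : ℕ, 2 ≤ k →
      fMk (Plin k) (3*k - 1) (sSpeLin k) = (k : ℝ) + 2 ∧
      fMk (Plin k) (3*k - 1) (sSpeLin k) / optMk (Plin k) (3*k - 1)
        = (((3*k : ℝ) - 1) + 7) / 3 := by
  intro k hk
  have hmk : fMk (Plin k) (3*k - 1) (sSpeLin k) = (k : ℝ) + 2 := by
    unfold fMk
    rw [load_spe_0 k hk, load_spe_1 k hk]
    exact max_eq_right (by linarith)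
  refine ⟨hmk, ?_⟩
  rw [hmk, opt_eq_one k hk, div_one]
  push_cast
  ring

end
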